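/- For real constants λ₁,…,λₙ and γ₁,…,γₙ, define Φ(k,t) = 1 + Σᵢ exp(λᵢ·k + (e^{λᵢ} - 1)·t + γᵢ) for k ∈ ℤ, t ∈ ℝ. Then Φ satisfies Φ_t(k,t) = Φ(k+1,t) - Φ(k,t), and consequently φ(k,t) := Φ(k,t)/Φ(k-1,t) is a (positive, hence well-defined) solution of the scalar semi-discrete Riemann equation φ_t = (φ⁺ - φ)·φ, where φ⁺(k,t) = φ(k+1,t). -/

import Mathlib

/-- The explicit function `Φ(k,t) = 1 + Σᵢ exp(λᵢk + (e^{λᵢ}-1)t + γᵢ)`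
solves the semi-discrete transport equation, is positive, and its Cole-Hopf transform
`φ = Φ/Φ⁻` solves the scalar semi-discrete Riemann equation `φ_t = (φ⁺ - φ)·φ`. -/
theorem stmt_5 (n : ℕ) (lam γ : Fin n → ℝ)
    (Φ φ : ℤ → ℝ → ℝ)
    (hΦ : ∀ k t, Φ k t =
      1 + ∑ i, Real.exp (lam i * (k : ℝ) + (Real.exp (lam i) - 1) * t + γ i))
    (hφ : ∀ k t, φ k t = Φ k t / Φ (k - 1) t) :
    (∀ k t, HasDerivAt (Φ k) (Φ (k + 1) t - Φ k t) t) ∧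
    (∀ k t, 0 < Φ k t) ∧
    (∀ k t, HasDerivAt (φ k) ((φ (k + 1) t - φ k t) * φ k t) t) := by
  have hpos : ∀ k t, 0 < Φ k t := by
    intro k t
    rw [hΦ]
    have : (0:ℝ) ≤ ∑ i, Real.exp (lam i * (k : ℝ) + (Real.exp (lam i) - 1) * t + γ i) :=
      Finset.sum_nonneg fun i _ => (Real.exp_pos _).le
    linarith
  have hderiv : ∀ k t, HasDerivAt (Φ k) (Φ (k + 1) t - Φ k t) t := by
    intro k t
    have hfun : Φ k = fun s => 1 + ∑ i, Real.exp (lam i * (k : ℝ) + (Real.exp (lam i) - 1) * s + γ i) :=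
      funext (hΦ k)
    rw [hfun]
    have h : HasDerivAt
        (fun s => 1 + ∑ i, Real.exp (lam i * (k : ℝ) + (Real.exp (lam i) - 1) * s + γ i))
        (∑ i, (Real.exp (lam i) - 1) *
          Real.exp (lam i * (k : ℝ) + (Real.exp (lam i) - 1) * t + γ i)) t := by
      apply HasDerivAt.const_add
      apply HasDerivAt.fun_sum
      intro i _
      have h1 : HasDerivAt (fun s : ℝ => lam i * (k : ℝ) + (Real.exp (lam i) - 1) * s + γ i)
          (Real.exp (lam i) - 1) t := by
        have := (((hasDerivAt_id t).const_mul (Real.exp (lam i) - 1)).const_add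
          (lam i * (k : ℝ))).add_const (γ i)
        simpa using this
      simpa [mul_comm] using h1.exp
    convert h using 1
    beta_reduce
    rw [hΦ]
    have : ∀ i : Fin n,
        Real.exp (lam i * ((k : ℝ) + 1) + (Real.exp (lam i) - 1) * t + γ i)
          = Real.exp (lam i) * Real.exp (lam i * (k : ℝ) + (Real.exp (lam i) - 1) * t + γ i) := by
      intro i
      rw [← Real.exp_add]
      ring_nf
    push_cast
    simp only [this]
    rw [add_sub_add_left_eq_sub, ← Finset.sum_sub_distrib]
    apply Finset.sum_congr rfl
    intro i _
    ring
  refine ⟨hderiv, hpos, ?_⟩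
  intro k t
  have hfun : φ k = fun s => Φ k s / Φ (k - 1) s := funext (hφ k)
  rw [hfun]
  have h1 := hderiv k t
  have h2 := hderiv (k - 1) t
  rw [sub_add_cancel] at h2
  have hne : Φ (k - 1) t ≠ 0 := (hpos (k - 1) t).ne'
  have h : HasDerivAt (fun s => Φ k s / Φ (k - 1) s) _ t := h1.div h2 hne
  convert h using 1
  beta_reduce
  rw [hφ, show k + 1 - 1 = k from by ring]
  have hne2 : Φ k t ≠ 0 := (hpos k t).ne'
  field_simp
  ring
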